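/- Suppose the linear functional ⟨·⟩ is reflection positive for reflections through edges and the two-point function G_L is torus symmetric. Then for any z ∈ T_L and any i ∈ {1,…,d} such that the coordinate z·e_i is odd, one has G_L(o, z) ≤ G_L(o, (z·e_i)·e_i). -/
import Mathlib


namespace RPPaper

/-- The torus `T_L = (ℤ/Lℤ)^d`. -/
abbrev Torus (d L : ℕ) : Type := Fin d → ZMod L

/-- The unit vector `e i`. -/
def unitVec {d L : ℕ} (i : Fin d) : Torus d L := fun k => if k = i then 1 else 0

/-- The point `a • e i` on the torus. -/
def axis {d L : ℕ} (i : Fin d) (a : ZMod L) : Torus d L := fun k => if k = i then a else 0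

/-- The integer representative of `a : ZMod L` in the interval `(-L/2, L/2]`. -/
def coordRep (L : ℕ) [NeZero L] (a : ZMod L) : ℤ :=
  if (a.val : ℤ) ≤ (L : ℤ) / 2 then (a.val : ℤ) else (a.val : ℤ) - (L : ℤ)

/-- The reflection of the torus in the hyperplane `{z : z·e i = t/2}` (here `t = 2m`);
it is a reflection through edges if `t` is odd, and through vertices if `t` is even. -/
def reflect {d L : ℕ} (i : Fin d) (t : ℕ) (x : Torus d L) : Torus d L :=
  Function.update x i ((t : ZMod L) - x i)

/-- The positive half `T_L^+` of the torus associated to the reflection in the hyperplane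
`{z : z·e i = t/2}`. -/
def posHalf (d L : ℕ) [NeZero L] (i : Fin d) (t : ℕ) : Finset (Torus d L) :=
  if t % 2 = 1 then Finset.univ.filter (fun x => (x i - (((t + 1) / 2 : ℕ) : ZMod L)).val < L / 2)
  else Finset.univ.filter (fun x => (x i - ((t / 2 : ℕ) : ZMod L)).val ≤ L / 2)

/-- The negative half `T_L^- = θ(T_L^+)`. -/
def negHalf (d L : ℕ) [NeZero L] (i : Fin d) (t : ℕ) : Finset (Torus d L) :=
  (posHalf d L i t).image (reflect i t)

/-- The state space `S = ∏_{x ∈ T_L} Σ_x` (all local state spaces equal to `Sig`). -/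
abbrev MState (d L : ℕ) (Sig : Type*) : Type _ := Torus d L → Sig

/-- `A : S → ℝ` has domain `D` if it depends only on the local states in `D`. -/
def HasDomain {d L : ℕ} {Sig : Type*} (A : MState d L Sig → ℝ) (D : Set (Torus d L)) : Prop :=
  ∀ w₁ w₂ : MState d L Sig, (∀ x ∈ D, w₁ x = w₂ x) → A w₁ = A w₂

/-- The action `θA (w) = A (θ w)`, where `(θ w) x = w (θ x)`, of the reflection on functions. -/
def reflectFun {d L : ℕ} {Sig : Type*} (i : Fin d) (t : ℕ) (A : MState d L Sig → ℝ) :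
    MState d L Sig → ℝ := fun w => A (fun x => w (reflect i t x))

/-- `⟨·⟩` is reflection positive with respect to the reflection in the hyperplane
`{z : z·e i = t/2}`: for all `A, B ∈ A_L^+` (members of the algebra with domain `T_L^+`),
`⟨A·θB⟩ = ⟨B·θA⟩` and `⟨A·θA⟩ ≥ 0`. -/
def IsRP {d L : ℕ} {Sig : Type*} [NeZero L] (AL : Subalgebra ℝ (MState d L Sig → ℝ))
    (phi : (MState d L Sig → ℝ) →ₗ[ℝ] ℝ) (i : Fin d) (t : ℕ) : Prop :=
  ∀ A B : MState d L Sig → ℝ, A ∈ AL → B ∈ AL →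
    HasDomain A ↑(posHalf d L i t) → HasDomain B ↑(posHalf d L i t) →
    phi (A * reflectFun i t B) = phi (B * reflectFun i t A) ∧ 0 ≤ phi (A * reflectFun i t A)

/-- Reflection positivity for all reflections through edges. -/
def RPEdges {d L : ℕ} {Sig : Type*} [NeZero L] (AL : Subalgebra ℝ (MState d L Sig → ℝ))
    (phi : (MState d L Sig → ℝ) →ₗ[ℝ] ℝ) : Prop :=
  ∀ (i : Fin d) (t : ℕ), t < 2 * L → t % 2 = 1 → IsRP AL phi i t

/-- Reflection positivity for all reflections through vertices. -/
def RPVertices {d L : ℕ} {Sig : Type*} [NeZero L] (AL : Subalgebra ℝ (MState d L Sig → ℝ))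
    (phi : (MState d L Sig → ℝ) →ₗ[ℝ] ℝ) : Prop :=
  ∀ (i : Fin d) (t : ℕ), t < 2 * L → t % 2 = 0 → IsRP AL phi i t

/-- The single-site function `F^j_x`, obtained from a function `f : Sig → ℝ` of the local
state at the origin by the (path-independent) sequence of reflections sending `o` to `x`. -/
def site {d L : ℕ} {Sig : Type*} (f : Sig → ℝ) (x : Torus d L) : MState d L Sig → ℝ :=
  fun w => f (w x)

/-- The two-point function `G_L(x,y) = ⟨F²_x F²_y ∏_{z ≠ x,y} F¹_z⟩`. -/
noncomputable def twoPoint {d L : ℕ} {Sig : Type*} [NeZero L]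
    (phi : (MState d L Sig → ℝ) →ₗ[ℝ] ℝ) (f1 f2 : Sig → ℝ) (x y : Torus d L) : ℝ :=
  phi (fun w => f2 (w x) * f2 (w y) * ∏ z ∈ (Finset.univ.erase x).erase y, f1 (w z))

/-- Torus symmetry: `⟨∏_{x∈A}F¹_x ∏_{x∈B}F²_x⟩ = ⟨∏_{x∈A+z}F¹_x ∏_{x∈B+z}F²_x⟩`. -/
def TorusSymmetric {d L : ℕ} {Sig : Type*} [NeZero L]
    (phi : (MState d L Sig → ℝ) →ₗ[ℝ] ℝ) (f1 f2 : Sig → ℝ) : Prop :=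
  ∀ (A B : Finset (Torus d L)) (z : Torus d L),
    phi (fun w => (∏ x ∈ A, f1 (w x)) * ∏ x ∈ B, f2 (w x)) =
      phi (fun w => (∏ x ∈ A, f1 (w (x + z))) * ∏ x ∈ B, f2 (w (x + z)))


lemma reflect_apply_self {d L : ℕ} (i : Fin d) (t : ℕ) (x : Torus d L) :
    reflect i t x i = (t : ZMod L) - x i := Function.update_self _ _ _

lemma reflect_apply_ne {d L : ℕ} (i : Fin d) (t : ℕ) (x : Torus d L) {k : Fin d} (hk : k ≠ i) :
    reflect i t x k = x k := Function.update_of_ne hk _ _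

lemma reflect_invol {d L : ℕ} (i : Fin d) (t : ℕ) (x : Torus d L) :
    reflect i t (reflect i t x) = x := by
  funext k
  by_cases hk : k = i
  · subst hk
    rw [reflect_apply_self, reflect_apply_self]
    ring
  · rw [reflect_apply_ne _ _ _ hk, reflect_apply_ne _ _ _ hk]

lemma reflect_inj {d L : ℕ} (i : Fin d) (t : ℕ) :
    Function.Injective (reflect (d := d) (L := L) i t) :=
  Function.LeftInverse.injective (g := reflect i t) (reflect_invol i t)

lemma mem_posHalf_odd {d L : ℕ} [NeZero L] (i : Fin d) {t : ℕ} (ht : t % 2 = 1)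
    (x : Torus d L) :
    x ∈ posHalf d L i t ↔ (x i - (((t + 1) / 2 : ℕ) : ZMod L)).val < L / 2 := by
  rw [posHalf, if_pos ht, Finset.mem_filter]
  simp

lemma reflect_mem_posHalf {d L : ℕ} [NeZero L] (hL : Even L) (i : Fin d) {t : ℕ}
    (ht : t % 2 = 1) (x : Torus d L) :
    reflect i t x ∈ posHalf d L i t ↔ x ∉ posHalf d L i t := by
  have hL0 : L ≠ 0 := NeZero.ne L
  obtain ⟨m, hm⟩ := hL
  have hL2 : 2 ≤ L := by omega
  haveI : Fact (1 < L) := ⟨hL2⟩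
  rw [mem_posHalf_odd i ht, mem_posHalf_odd i ht, reflect_apply_self]
  set s : ZMod L := (((t + 1) / 2 : ℕ) : ZMod L) with hs
  have hts : (t : ZMod L) = 2 * s - 1 := by
    have h1 : t + 1 = 2 * ((t + 1) / 2) := by omega
    have h2 : ((t + 1 : ℕ) : ZMod L) = ((2 * ((t + 1) / 2) : ℕ) : ZMod L) := by rw [← h1]
    push_cast at h2
    linear_combination h2
  have key : (t : ZMod L) - x i - s = -((x i - s) + 1) := by rw [hts]; ring
  rw [key]
  set u := x i - s with hu
  have hval := ZMod.val_lt u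
  rcases eq_or_ne (u + 1) 0 with h | h
  · have hu1 : u = -1 := by linear_combination h
    have huv : u.val = L - 1 := by
      rw [hu1, ZMod.neg_val]
      simp [ZMod.val_one L, show (1 : ZMod L) ≠ 0 from one_ne_zero]
    rw [h]
    simp only [neg_zero, ZMod.val_zero]
    omega
  · have h1 : (-(u + 1)).val = L - (u + 1).val := by
      rw [ZMod.neg_val, if_neg h]
    have hune : u.val ≠ L - 1 := by
      intro hc
      apply h
      have h3 : u = ((L - 1 : ℕ) : ZMod L) := by
        rw [← hc, ZMod.natCast_val, ZMod.cast_id]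
      rw [h3]
      have h4 : (((L - 1 : ℕ) : ZMod L)) + 1 = ((L - 1 + 1 : ℕ) : ZMod L) := by push_cast; ring
      rw [h4, show L - 1 + 1 = L by omega, ZMod.natCast_self]
    have h2 : (u + 1).val = u.val + 1 := by
      rw [ZMod.val_add_of_lt]
      · rw [ZMod.val_one L]
      · rw [ZMod.val_one L]; omega
    rw [h1, h2]
    omega

lemma zero_coord_mem {d L : ℕ} [NeZero L] (hL : Even L) (i : Fin d) {a : ℕ}
    (ha : a % 2 = 1) (haL : a < L) (x : Torus d L) (hx : x i = 0) :
    x ∈ posHalf d L i (a + L) := by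
  obtain ⟨m, hm⟩ := hL
  have hm1 : 1 ≤ m := by omega
  rw [mem_posHalf_odd i (by omega), hx, zero_sub]
  set sN : ℕ := (a + L + 1) / 2 with hsN
  have hsplit : sN = (a + 1) / 2 + m := by omega
  set s0 : ℕ := (a + 1) / 2 with hs0
  have hs01 : 1 ≤ s0 := by omega
  have hs0m : s0 ≤ m := by omega
  rcases eq_or_lt_of_le hs0m with heq | hlt
  · have hEq : sN = L := by omega
    rw [hEq, ZMod.natCast_self, neg_zero, ZMod.val_zero]
    omega
  · have hsL : sN < L := by omega
    have hvs : ((sN : ZMod L)).val = sN := ZMod.val_cast_of_lt hsL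
    have hne : (sN : ZMod L) ≠ 0 := by
      intro hc
      rw [hc, ZMod.val_zero] at hvs
      omega
    rw [ZMod.neg_val, if_neg hne, hvs]
    omega

/-- If `⟨·⟩` is reflection positive for reflections through edges and the two-point function
is torus symmetric, then for any `z ∈ T_L` and `i` with `z·e i` odd,
`G_L(o, z) ≤ G_L(o, (z·e i)·e i)`. -/
theorem statement0 {d L : ℕ} [NeZero L] (hd : 2 ≤ d) (hL : Even L) {Sig : Type*}
    (AL : Subalgebra ℝ (MState d L Sig → ℝ)) (hfin : FiniteDimensional ℝ AL)
    (phi : (MState d L Sig → ℝ) →ₗ[ℝ] ℝ) (hone : phi 1 = 1)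
    (f1 f2 : Sig → ℝ)
    (hF1 : ∀ x : Torus d L, site f1 x ∈ AL) (hF2 : ∀ x : Torus d L, site f2 x ∈ AL)
    (hRP : RPEdges AL phi) (hsym : TorusSymmetric phi f1 f2)
    (z : Torus d L) (i : Fin d) (hodd : Odd (coordRep L (z i))) :
    twoPoint phi f1 f2 0 z ≤ twoPoint phi f1 f2 0 (axis i (z i)) := by
  classical
  obtain ⟨m, hm⟩ := hL
  have hL0 : L ≠ 0 := NeZero.ne L
  -- basic coordinate facts
  set a : ℕ := (z i).val with hadef
  have haL : a < L := ZMod.val_lt (z i)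
  have ha : a % 2 = 1 := by
    rw [Int.odd_iff] at hodd
    unfold coordRep at hodd
    split_ifs at hodd <;> omega
  have hm1 : 1 ≤ m := by omega
  set t : ℕ := a + L with htdef
  have ht2L : t < 2 * L := by omega
  have htodd : t % 2 = 1 := by omega
  have htz : ((t : ℕ) : ZMod L) = z i := by
    rw [htdef]
    push_cast
    rw [ZMod.natCast_self, ZMod.natCast_val, ZMod.cast_id]
    ring
  set P : Finset (Torus d L) := posHalf d L i t with hPdef
  have hEven : Even L := ⟨m, hm⟩
  -- points
  set z' : Torus d L := axis i (z i) with hz'def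
  set zp : Torus d L := Function.update z i 0 with hzpdef
  have hzpi : zp i = 0 := Function.update_self _ _ _
  have h0P : (0 : Torus d L) ∈ P := zero_coord_mem hEven i ha haL _ rfl
  have hzpP : zp ∈ P := zero_coord_mem hEven i ha haL _ hzpi
  have hzi0 : z i ≠ 0 := by
    intro hc
    rw [hadef] at ha
    rw [hc, ZMod.val_zero] at ha
    omega
  have h0z' : (0 : Torus d L) ≠ z' := by
    intro hc
    have := congrFun hc i
    rw [hz'def] at this
    simp [axis] at this
    exact hzi0 this.symm
  have hrefl0 : reflect i t 0 = z' := by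
    funext k
    by_cases hk : k = i
    · subst hk
      rw [reflect_apply_self]
      simp [hz'def, axis, htz]
    · rw [reflect_apply_ne _ _ _ hk]
      simp [hz'def, axis, hk]
  have hreflzp : reflect i t zp = z := by
    funext k
    by_cases hk : k = i
    · subst hk
      rw [reflect_apply_self, hzpi, htz, sub_zero]
    · rw [reflect_apply_ne _ _ _ hk, hzpdef, Function.update_of_ne hk]
  -- the functions F_p
  set F : Torus d L → MState d L Sig → ℝ :=
    fun p => fun w => f2 (w p) * ∏ x ∈ P.erase p, f1 (w x) with hFdef
  have hFmem : ∀ p : Torus d L, F p ∈ AL := by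
    intro p
    have hEq : F p = site f2 p * ∏ x ∈ P.erase p, site f1 x := by
      funext w
      simp [hFdef, site, Finset.prod_apply]
    rw [hEq]
    exact mul_mem (hF2 p) (prod_mem fun x _ => hF1 x)
  have hFdom : ∀ p ∈ P, HasDomain (F p) ↑P := by
    intro p hp w1 w2 hw
    simp only [hFdef]
    rw [hw p (Finset.mem_coe.mpr hp)]
    congr 1
    exact Finset.prod_congr rfl fun x hx => by
      rw [hw x (Finset.mem_coe.mpr (Finset.mem_of_mem_erase hx))]
  -- image of the positive half under reflection
  have himg : ∀ q : Torus d L, (P.erase q).image (reflect i t) = Pᶜ.erase (reflect i t q) := by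
    intro q
    ext y
    simp only [Finset.mem_image, Finset.mem_erase, Finset.mem_compl]
    constructor
    · rintro ⟨x, ⟨hxq, hxP⟩, rfl⟩
      exact ⟨fun hc => hxq (reflect_inj i t hc),
        fun hc => ((reflect_mem_posHalf hEven i htodd x).mp hc) hxP⟩
    · rintro ⟨hyq, hyP⟩
      refine ⟨reflect i t y, ⟨?_, ?_⟩, reflect_invol i t y⟩
      · intro hc
        exact hyq (by rw [← hc, reflect_invol])
      · rw [reflect_mem_posHalf hEven i htodd]
        exact hyP
  -- the key pointwise identity
  have key : ∀ p q : Torus d L, p ∈ P → q ∈ P →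
      F p * reflectFun i t (F q) =
        (fun w => f2 (w p) * f2 (w (reflect i t q)) *
          ∏ x ∈ (Finset.univ.erase p).erase (reflect i t q), f1 (w x)) := by
    intro p q hp hq
    funext w
    have hqP' : reflect i t q ∉ P :=
      fun hc => ((reflect_mem_posHalf hEven i htodd q).mp hc) hq
    show (f2 (w p) * ∏ x ∈ P.erase p, f1 (w x)) *
        (f2 (w (reflect i t q)) * ∏ x ∈ P.erase q, f1 (w (reflect i t x))) = _
    have hre : ∏ x ∈ P.erase q, f1 (w (reflect i t x)) =
        ∏ y ∈ Pᶜ.erase (reflect i t q), f1 (w y) := by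
      rw [← himg q, Finset.prod_image (fun x _ y _ h => reflect_inj i t h)]
    rw [hre]
    have hdisj : Disjoint (P.erase p) (Pᶜ.erase (reflect i t q)) := by
      refine Finset.disjoint_left.mpr ?_
      intro x hx hx'
      exact (Finset.mem_compl.mp (Finset.mem_of_mem_erase hx')) (Finset.mem_of_mem_erase hx)
    have hunion : (P.erase p) ∪ (Pᶜ.erase (reflect i t q)) =
        (Finset.univ.erase p).erase (reflect i t q) := by
      ext x
      simp only [Finset.mem_union, Finset.mem_erase, Finset.mem_compl, Finset.mem_univ,
        and_true]
      constructor
      · rintro (⟨hxp, hxP⟩ | ⟨hxq, hxP⟩)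
        · exact ⟨fun hc => hqP' (hc ▸ hxP), hxp⟩
        · exact ⟨hxq, fun hc => hxP (hc ▸ hp)⟩
      · rintro ⟨hxq, hxp⟩
        by_cases hxP : x ∈ P
        · exact Or.inl ⟨hxp, hxP⟩
        · exact Or.inr ⟨hxq, hxP⟩
    rw [← hunion, Finset.prod_union hdisj]
    ring
  -- identify the three phi-values
  have hA : phi (F 0 * reflectFun i t (F 0)) = twoPoint phi f1 f2 0 z' := by
    rw [key 0 0 h0P h0P, hrefl0, twoPoint]
  have hAB : phi (F 0 * reflectFun i t (F zp)) = twoPoint phi f1 f2 0 z := by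
    rw [key 0 zp h0P hzpP, hreflzp, twoPoint]
  have hB : phi (F zp * reflectFun i t (F zp)) = twoPoint phi f1 f2 0 z' := by
    rw [key zp zp hzpP hzpP, hreflzp]
    -- torus symmetry: translate by zp
    have hz'zp : z' + zp = z := by
      funext k
      by_cases hk : k = i
      · subst hk
        simp [hz'def, axis, hzpdef]
      · simp [hz'def, axis, hk, hzpdef, Function.update_of_ne hk]
    have h0zp : (0 : Torus d L) + zp = zp := zero_add _
    have hts := hsym ((Finset.univ.erase (0 : Torus d L)).erase z') {0, z'} zp
    have hLHS : (fun w : MState d L Sig => (∏ x ∈ (Finset.univ.erase (0 : Torus d L)).erase z', f1 (w x)) *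
        ∏ x ∈ ({0, z'} : Finset (Torus d L)), f2 (w x)) =
        (fun w => f2 (w 0) * f2 (w z') * ∏ x ∈ (Finset.univ.erase (0 : Torus d L)).erase z', f1 (w x)) := by
      funext w
      rw [Finset.prod_pair h0z']
      ring
    have himgshift : ((Finset.univ.erase (0 : Torus d L)).erase z').image (· + zp) =
        (Finset.univ.erase zp).erase z := by
      have hinj : Function.Injective (fun x : Torus d L => x + zp) :=
        fun x y h => by simpa using congrArg (· - zp) h
      rw [Finset.image_erase hinj, Finset.image_erase hinj]
      have huniv : Finset.univ.image (fun x : Torus d L => x + zp) = Finset.univ := by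
        ext y
        simp only [Finset.mem_image, Finset.mem_univ, iff_true, true_and]
        exact ⟨y - zp, by abel⟩
      rw [huniv]
      simp only [zero_add, hz'zp]
    have hRHS : (fun w : MState d L Sig => (∏ x ∈ (Finset.univ.erase (0 : Torus d L)).erase z', f1 (w (x + zp))) *
        ∏ x ∈ ({0, z'} : Finset (Torus d L)), f2 (w (x + zp))) =
        (fun w => f2 (w zp) * f2 (w z) * ∏ x ∈ (Finset.univ.erase zp).erase z, f1 (w x)) := by
      funext w
      rw [Finset.prod_pair h0z']
      have hreidx : ∏ x ∈ (Finset.univ.erase (0 : Torus d L)).erase z', f1 (w (x + zp)) =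
          ∏ y ∈ (Finset.univ.erase zp).erase z, f1 (w y) := by
        rw [← himgshift, Finset.prod_image (fun x _ y _ h => by simpa using congrArg (· - zp) h)]
      rw [hreidx, h0zp, hz'zp]
      ring
    rw [hLHS, hRHS] at hts
    rw [← hts, twoPoint]
  -- reflection positivity
  have hRPt := hRP i t ht2L htodd
  obtain ⟨hsymm, -⟩ := hRPt (F 0) (F zp) (hFmem 0) (hFmem zp) (hFdom 0 h0P) (hFdom zp hzpP)
  have hsub_mem : F 0 - F zp ∈ AL := sub_mem (hFmem 0) (hFmem zp)
  have hsub_dom : HasDomain (F 0 - F zp) ↑P := by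
    intro w1 w2 hw
    show F 0 w1 - F zp w1 = F 0 w2 - F zp w2
    rw [hFdom 0 h0P w1 w2 hw, hFdom zp hzpP w1 w2 hw]
  obtain ⟨-, hpos⟩ := hRPt (F 0 - F zp) (F 0 - F zp) hsub_mem hsub_mem hsub_dom hsub_dom
  have hexpand : (F 0 - F zp) * reflectFun i t (F 0 - F zp) =
      (F 0 * reflectFun i t (F 0) - F 0 * reflectFun i t (F zp)) -
        (F zp * reflectFun i t (F 0) - F zp * reflectFun i t (F zp)) := by
    funext w
    simp only [Pi.mul_apply, Pi.sub_apply, reflectFun]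
    ring
  rw [hexpand, map_sub, map_sub, map_sub] at hpos
  rw [hA, hAB, hB] at hpos
  rw [← hsymm, hAB] at hpos
  linarith

end RPPaper
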